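/- Error bound for spectrum-sliced incremental random binning (information reconciliation): Let 𝒳, 𝒴 be countable sets and P_{XY} a pmf on 𝒳×𝒴. Let λ_min, Δ, γ > 0, L a positive integer, and for 1 ≤ j ≤ L set λ_j = λ_min + (j−1)·Δ and 𝒯_j = { (x,y) : λ_j ≤ −log P_{X|Y}(x|y) < λ_j + Δ }. Let M_1, …, M_L be positive integers satisfying log(M_1·M_2⋯M_l) ≥ λ_l + Δ + γ for every 1 ≤ l ≤ L. Then there exist functions F_j : 𝒳 → {1,…,M_j}, 1 ≤ j ≤ L, such that P_{XY}( { (x,y) : ∃ l ∈ {1,…,L}, ∃ x̂ ≠ x with (x̂,y) ∈ 𝒯_l and F_j(x̂) = F_j(x) for all 1 ≤ j ≤ l } ) ≤ L·2^{−γ}. -/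

import Mathlib

open scoped BigOperators

noncomputable section

attribute [local instance] Classical.propDecidable

/-- Probability of a set under a pmf. -/
def probOf {α : Type*} (P : α → ℝ) (S : Set α) : ℝ := ∑' a : S, P a

/-- `P` is a probability mass function. -/
def IsPMF {α : Type*} (P : α → ℝ) : Prop := (∀ a, 0 ≤ P a) ∧ ∑' a, P a = 1

def pmargY {X Y : Type*} (P : X × Y → ℝ) : Y → ℝ := fun y => ∑' x : X, P (x, y)

/-- `P_{X|Y}(x|y) = P_XY(x,y)/P_Y(y)`. -/
def pcondXY {X Y : Type*} (P : X × Y → ℝ) (p : X × Y) : ℝ := P p / pmargY P p.2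

/-- real-valued indicator of a proposition, with a fixed classical instance -/
private noncomputable def ind (P : Prop) : ℝ := @ite ℝ P (Classical.propDecidable P) 1 0

private lemma ind_of (P : Prop) (h : P) : ind P = 1 := by simp [ind, h]

private lemma ind_of_not (P : Prop) (h : ¬ P) : ind P = 0 := by simp [ind, h]

private lemma ind_nonneg (P : Prop) : 0 ≤ ind P := by
  by_cases h : P
  · rw [ind_of P h]; norm_num
  · rw [ind_of_not P h]

private lemma ind_congr {P Q : Prop} (h : P ↔ Q) : ind P = ind Q := by
  by_cases hp : P
  · rw [ind_of P hp, ind_of Q (h.1 hp)]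
  · rw [ind_of_not P hp, ind_of_not Q (fun hq => hp (h.2 hq))]

private lemma sum_ind_eq_single {α : Type*} [Fintype α] (a : α) :
    ∑ x : α, ind (x = a) = 1 := by
  rw [Finset.sum_eq_single a]
  · exact ind_of _ rfl
  · intro b _ hb; exact ind_of_not _ hb
  · intro h; exact absurd (Finset.mem_univ a) h

private lemma cylinder_sum {L : ℕ} (M : Fin L → ℕ) (s : Finset (Fin L)) (v : ∀ j, Fin (M j)) :
    ∑ g : (∀ j, Fin (M j)), ind (∀ j ∈ s, g j = v j) = ∏ j ∈ sᶜ, (M j : ℝ) := by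
  classical
  rw [← Equiv.sum_comp (Equiv.piEquivPiSubtypeProd (· ∈ s) (fun j => Fin (M j))).symm]
  rw [Fintype.sum_prod_type]
  have hcond : ∀ (u : ∀ i : {j : Fin L // j ∈ s}, Fin (M i.1)) (w : ∀ i : {j : Fin L // ¬ j ∈ s}, Fin (M i.1)),
      (∀ j ∈ s, ((Equiv.piEquivPiSubtypeProd (· ∈ s) (fun j => Fin (M j))).symm (u, w)) j = v j)
      ↔ u = (fun i : {j : Fin L // j ∈ s} => v i.1) := by
    intro u w
    constructor
    · intro h; funext j
      have := h j.1 j.2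
      rw [← this]
      simp [Equiv.piEquivPiSubtypeProd, j.2]
    · intro h j hj
      simp [Equiv.piEquivPiSubtypeProd, hj, h]
  calc ∑ u : ∀ i : {j : Fin L // j ∈ s}, Fin (M i.1), ∑ w : ∀ i : {j : Fin L // ¬ j ∈ s}, Fin (M i.1),
        ind (∀ j ∈ s, ((Equiv.piEquivPiSubtypeProd (· ∈ s) (fun j => Fin (M j))).symm (u, w)) j = v j)
      = ∑ u : ∀ i : {j : Fin L // j ∈ s}, Fin (M i.1), ∑ _w : ∀ i : {j : Fin L // ¬ j ∈ s}, Fin (M i.1),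
        ind (u = (fun i : {j : Fin L // j ∈ s} => v i.1)) := by
        refine Finset.sum_congr rfl fun u _ => Finset.sum_congr rfl fun w _ => ?_
        exact ind_congr (hcond u w)
    _ = ∏ j ∈ sᶜ, (M j : ℝ) := by
        rw [Finset.sum_comm, Finset.sum_const]
        rw [sum_ind_eq_single (fun i : {j : Fin L // j ∈ s} => v i.1)]
        rw [nsmul_eq_mul, mul_one, Finset.card_univ]
        rw [← Finset.prod_coe_sort sᶜ (fun j => (M j : ℝ))]
        have : Fintype.card (∀ i : {j : Fin L // ¬ j ∈ s}, Fin (M i.1))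
            = ∏ i : {j : Fin L // ¬ j ∈ s}, M i.1 := by
          simp [Fintype.card_pi]
        rw [this]
        push_cast
        refine Fintype.prod_equiv (Equiv.subtypeEquivRight (fun j => ?_)) _ _ (fun i => rfl)
        simp [Finset.mem_compl]

private lemma count_collision {L : ℕ} (M : Fin L → ℕ) (hM : ∀ j, 0 < M j)
    {C : Type*} [Fintype C] [Fintype (C → ∀ j, Fin (M j))]
    (a b : C) (hab : a ≠ b) (s : Finset (Fin L)) :
    ∑ φ : C → (∀ j, Fin (M j)), ind (∀ j ∈ s, φ b j = φ a j)
      = (Fintype.card (C → ∀ j, Fin (M j)) : ℝ) * ∏ j ∈ s, ((M j : ℝ))⁻¹ := by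
  classical
  calc ∑ φ : C → (∀ j, Fin (M j)), ind (∀ j ∈ s, φ b j = φ a j)
      = ∑ q : (∀ j, Fin (M j)) × ({x : C // x ≠ b} → ∀ j, Fin (M j)),
          ind (∀ j ∈ s, q.1 j = q.2 ⟨a, hab⟩ j) :=
        Fintype.sum_equiv (Equiv.funSplitAt b (∀ j, Fin (M j))) _ _ (fun φ => rfl)
    _ = ∑ ψ : {x : C // x ≠ b} → ∀ j, Fin (M j), ∑ g : ∀ j, Fin (M j),
          ind (∀ j ∈ s, g j = ψ ⟨a, hab⟩ j) := by
        rw [Fintype.sum_prod_type]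
        rw [Finset.sum_comm]
    _ = ∑ _ψ : {x : C // x ≠ b} → ∀ j, Fin (M j), ∏ j ∈ sᶜ, (M j : ℝ) := by
        refine Finset.sum_congr rfl fun ψ _ => ?_
        exact cylinder_sum M s (ψ ⟨a, hab⟩)
    _ = (Fintype.card (C → ∀ j, Fin (M j)) : ℝ) * ∏ j ∈ s, ((M j : ℝ))⁻¹ := by
        rw [Finset.sum_const, nsmul_eq_mul, Finset.card_univ]
        have hcard : (Fintype.card (C → ∀ j, Fin (M j)) : ℝ)
            = (Fintype.card ({x : C // x ≠ b} → ∀ j, Fin (M j)) : ℝ) * ∏ j, (M j : ℝ) := by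
          rw [Fintype.card_congr (Equiv.funSplitAt b (∀ j, Fin (M j)))]
          rw [Fintype.card_prod]
          have : Fintype.card (∀ j, Fin (M j)) = ∏ j, M j := by simp [Fintype.card_pi]
          rw [this]
          push_cast; ring
        rw [hcard]
        have hsplit : (∏ j, (M j : ℝ)) = (∏ j ∈ s, (M j : ℝ)) * ∏ j ∈ sᶜ, (M j : ℝ) := by
          rw [← Finset.prod_mul_prod_compl]
        rw [hsplit]
        have hne : (∏ j ∈ s, (M j : ℝ)) ≠ 0 := by
          refine Finset.prod_ne_zero_iff.2 fun j _ => ?_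
          exact_mod_cast (hM j).ne'
        rw [Finset.prod_inv_distrib]
        field_simp


private lemma slice_card {X Y : Type*} (PXY : X × Y → ℝ)
    (hpos : ∀ p, 0 ≤ PXY p) (hsum : Summable PXY) (y : Y) (lo hi : ℝ) (hlo : 0 < lo) :
    {x : X | lo ≤ -Real.logb 2 (pcondXY PXY (x, y)) ∧
      -Real.logb 2 (pcondXY PXY (x, y)) < hi}.Finite ∧
    ∀ T : Finset X, (↑T ⊆ {x : X | lo ≤ -Real.logb 2 (pcondXY PXY (x, y)) ∧
      -Real.logb 2 (pcondXY PXY (x, y)) < hi}) → (T.card : ℝ) ≤ (2:ℝ) ^ hi := by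
  set S := {x : X | lo ≤ -Real.logb 2 (pcondXY PXY (x, y)) ∧
      -Real.logb 2 (pcondXY PXY (x, y)) < hi} with hS
  have hsumy : Summable (fun x : X => PXY (x, y)) := by
    have : (fun x : X => PXY (x, y)) = PXY ∘ (fun x => (x, y)) := rfl
    rw [this]
    exact hsum.comp_injective (fun a b hab => by simpa using congrArg Prod.fst hab)
  have hmnn : 0 ≤ pmargY PXY y := tsum_nonneg (fun x => hpos _)
  -- every slice element has conditional prob > 2^(-hi), and P (x,y) > 2^(-hi) * pmargY
  have hkey : ∀ x ∈ S, (2:ℝ) ^ (-hi) * pmargY PXY y < PXY (x, y) ∧ 0 < pmargY PXY y := by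
    intro x hx
    have hcnn : 0 ≤ pcondXY PXY (x, y) := div_nonneg (hpos _) hmnn
    have hcpos : 0 < pcondXY PXY (x, y) := by
      rcases hcnn.lt_or_eq with h | h
      · exact h
      · exfalso
        have h0 : -Real.logb 2 (pcondXY PXY (x, y)) = 0 := by rw [← h, Real.logb_zero, neg_zero]
        have h1 := hx.1
        rw [h0] at h1
        linarith
    have hmpos : 0 < pmargY PXY y := by
      rcases hmnn.lt_or_eq with h | h
      · exact h
      · exfalso
        have : pcondXY PXY (x, y) = 0 := by
          unfold pcondXY; rw [← h]; simp
        rw [this] at hcpos; exact lt_irrefl _ hcpos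
    have h2 : (2:ℝ) ^ (-hi) < pcondXY PXY (x, y) := by
      have := hx.2
      have hlt : -hi < Real.logb 2 (pcondXY PXY (x, y)) := by linarith
      exact (Real.lt_logb_iff_rpow_lt (by norm_num) hcpos).1 hlt
    have : pcondXY PXY (x, y) * pmargY PXY y = PXY (x, y) := by
      unfold pcondXY
      field_simp
    constructor
    · calc (2:ℝ) ^ (-hi) * pmargY PXY y < pcondXY PXY (x, y) * pmargY PXY y := by
            exact mul_lt_mul_of_pos_right h2 hmpos
        _ = PXY (x, y) := this
    · exact hmpos
  have hcard : ∀ T : Finset X, (↑T ⊆ S) → (T.card : ℝ) ≤ (2:ℝ) ^ hi := by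
    intro T hT
    rcases T.eq_empty_or_nonempty with rfl | hTne
    · simp [Real.rpow_natCast]
      positivity
    · obtain ⟨x0, hx0⟩ := hTne
      have hmpos : 0 < pmargY PXY y := (hkey x0 (hT hx0)).2
      have h1 : (T.card : ℝ) * ((2:ℝ) ^ (-hi) * pmargY PXY y) ≤ pmargY PXY y := by
        calc (T.card : ℝ) * ((2:ℝ) ^ (-hi) * pmargY PXY y)
            = ∑ _x ∈ T, (2:ℝ) ^ (-hi) * pmargY PXY y := by rw [Finset.sum_const, nsmul_eq_mul]
          _ ≤ ∑ x ∈ T, PXY (x, y) := Finset.sum_le_sum (fun x hx => (hkey x (hT hx)).1.le)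
          _ ≤ ∑' x : X, PXY (x, y) := Summable.sum_le_tsum T (fun x _ => hpos _) hsumy
          _ = pmargY PXY y := rfl
      have hrp : (0:ℝ) < (2:ℝ) ^ (-hi) := Real.rpow_pos_of_pos (by norm_num) _
      have h2 : (T.card : ℝ) * (2:ℝ) ^ (-hi) ≤ 1 := by
        rw [← mul_le_mul_iff_of_pos_right hmpos]
        calc (T.card : ℝ) * (2:ℝ) ^ (-hi) * pmargY PXY y
            = (T.card : ℝ) * ((2:ℝ) ^ (-hi) * pmargY PXY y) := by ring
          _ ≤ pmargY PXY y := h1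
          _ = 1 * pmargY PXY y := by ring
      have hinv : ((2:ℝ) ^ (-hi))⁻¹ = (2:ℝ) ^ hi := by
        rw [← Real.rpow_neg (by norm_num), neg_neg]
      calc (T.card : ℝ) = (T.card : ℝ) * (2:ℝ) ^ (-hi) * ((2:ℝ) ^ (-hi))⁻¹ := by
            field_simp
        _ ≤ 1 * ((2:ℝ) ^ (-hi))⁻¹ := by
            apply mul_le_mul_of_nonneg_right h2 (by positivity)
        _ = (2:ℝ) ^ hi := by rw [one_mul, hinv]
  refine ⟨?_, hcard⟩
  by_contra hinf
  obtain ⟨n, hn⟩ := exists_nat_gt ((2:ℝ) ^ hi)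
  obtain ⟨T, hTS, hTcard⟩ := Set.Infinite.exists_subset_card_eq hinf n
  have := hcard T hTS
  rw [hTcard] at this
  linarith

set_option maxHeartbeats 1000000 in
/-- error bound for spectrum-sliced incremental random binning.
Slices are indexed by `l : Fin L` (`l` corresponds to `j = l+1` of the paper, so
`λ_j = λ_min + (j−1)·Δ` becomes `λ_min + l·Δ`); `𝒯_l` is the set of pairs with
`λ_min + l·Δ ≤ −log P_{X|Y}(x|y) < λ_min + l·Δ + Δ`. -/
theorem spectrum_sliced_binning_error
    {X Y : Type*} [Countable X] [Countable Y]
    (PXY : X × Y → ℝ) (hPXY : IsPMF PXY)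
    (lmin Δ γ : ℝ) (hlmin : 0 < lmin) (hΔ : 0 < Δ) (hγ : 0 < γ)
    (L : ℕ) (hL : 0 < L)
    (M : Fin L → ℕ) (hM : ∀ j, 0 < M j)
    -- incremental bin sizes: log(M_1 ⋯ M_l) ≥ λ_l + Δ + γ
    (hMsize : ∀ l : Fin L,
      lmin + (l : ℕ) * Δ + Δ + γ ≤
        Real.logb 2 (∏ j ∈ Finset.univ.filter (fun j : Fin L => j ≤ l), (M j : ℝ))) :
    ∃ F : (j : Fin L) → X → Fin (M j),
      probOf PXY {p : X × Y | ∃ l : Fin L, ∃ x' : X, x' ≠ p.1 ∧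
          (lmin + (l : ℕ) * Δ ≤ -Real.logb 2 (pcondXY PXY (x', p.2)) ∧
            -Real.logb 2 (pcondXY PXY (x', p.2)) < lmin + (l : ℕ) * Δ + Δ) ∧
          ∀ j : Fin L, j ≤ l → F j x' = F j p.1}
        ≤ (L : ℝ) * (2 : ℝ) ^ (-γ) := by
  classical
  have hw : ∀ p, 0 ≤ PXY p := hPXY.1
  have hsum : Summable PXY := by
    by_contra h
    have := hPXY.2
    rw [tsum_eq_zero_of_not_summable h] at this
    norm_num at this
  set c : ℝ := (L : ℝ) * (2 : ℝ) ^ (-γ) with hc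
  have hcnn : 0 ≤ c := by
    have : (0:ℝ) ≤ (2:ℝ) ^ (-γ) := (Real.rpow_pos_of_pos (by norm_num) _).le
    positivity
  -- the bad predicate
  let bad : ((j : Fin L) → X → Fin (M j)) → X × Y → Prop := fun F p =>
    ∃ l : Fin L, ∃ x' : X, x' ≠ p.1 ∧
      (lmin + (l : ℕ) * Δ ≤ -Real.logb 2 (pcondXY PXY (x', p.2)) ∧
        -Real.logb 2 (pcondXY PXY (x', p.2)) < lmin + (l : ℕ) * Δ + Δ) ∧
      ∀ j : Fin L, j ≤ l → F j x' = F j p.1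
  -- slices
  have hlam : ∀ l : Fin L, (0:ℝ) < lmin + (l : ℕ) * Δ := by
    intro l
    have : (0:ℝ) ≤ (l : ℕ) * Δ := by positivity
    linarith
  have hslice := fun (l : Fin L) (y : Y) =>
    slice_card PXY hw hsum y (lmin + (l : ℕ) * Δ) (lmin + (l : ℕ) * Δ + Δ) (hlam l)
  let Sfin : Fin L → Y → Finset X := fun l y => (hslice l y).1.toFinset
  have hSfin_mem : ∀ (l : Fin L) (y : Y) (x' : X), x' ∈ Sfin l y ↔
      (lmin + (l : ℕ) * Δ ≤ -Real.logb 2 (pcondXY PXY (x', y)) ∧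
        -Real.logb 2 (pcondXY PXY (x', y)) < lmin + (l : ℕ) * Δ + Δ) := by
    intro l y x'
    simp [Sfin, Set.Finite.mem_toFinset, Set.mem_setOf_eq]
  have hSfin_card : ∀ (l : Fin L) (y : Y),
      ((Sfin l y).card : ℝ) ≤ (2:ℝ) ^ (lmin + (l : ℕ) * Δ + Δ) := by
    intro l y
    exact (hslice l y).2 _ (by intro x hx; exact (hslice l y).1.mem_toFinset.1 hx)
  -- bound on bin size products
  have hMprod : ∀ l : Fin L,
      (∏ j ∈ Finset.univ.filter (fun j : Fin L => j ≤ l), ((M j : ℝ))⁻¹)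
        ≤ (2:ℝ) ^ (-(lmin + (l : ℕ) * Δ + Δ + γ)) := by
    intro l
    have hppos : (0:ℝ) < ∏ j ∈ Finset.univ.filter (fun j : Fin L => j ≤ l), (M j : ℝ) :=
      Finset.prod_pos fun j _ => by exact_mod_cast hM j
    have h1 : (2:ℝ) ^ (lmin + (l : ℕ) * Δ + Δ + γ)
        ≤ ∏ j ∈ Finset.univ.filter (fun j : Fin L => j ≤ l), (M j : ℝ) :=
      (Real.le_logb_iff_rpow_le (by norm_num) hppos).1 (hMsize l)
    rw [Finset.prod_inv_distrib, Real.rpow_neg (by norm_num)]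
    exact inv_anti₀ (Real.rpow_pos_of_pos (by norm_num) _) h1
  -- coordinates needed for a finite set of pairs
  let CC : Finset (X × Y) → Finset X := fun Pi =>
    Pi.image Prod.fst ∪ Pi.biUnion (fun p => Finset.univ.biUnion (fun l : Fin L => Sfin l p.2))
  have hmem1 : ∀ (Pi : Finset (X × Y)) (p : X × Y), p ∈ Pi → p.1 ∈ CC Pi := by
    intro Pi p hp
    exact Finset.mem_union_left _ (Finset.mem_image_of_mem Prod.fst hp)
  have hmem2 : ∀ (Pi : Finset (X × Y)) (p : X × Y) (l : Fin L) (x' : X),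
      p ∈ Pi → x' ∈ Sfin l p.2 → x' ∈ CC Pi := by
    intro Pi p l x' hp hx'
    refine Finset.mem_union_right _ (Finset.mem_biUnion.2 ⟨p, hp, ?_⟩)
    exact Finset.mem_biUnion.2 ⟨l, Finset.mem_univ l, hx'⟩
  -- KEY FINITE LEMMA
  have key : ∀ Pi : Finset (X × Y), ∃ F : (j : Fin L) → X → Fin (M j),
      ∑ p ∈ Pi, PXY p * ind (bad F p) ≤ c := by
    intro Pi
    haveI hΩne : Nonempty ({x : X // x ∈ CC Pi} → ∀ j, Fin (M j)) :=
      ⟨fun _ => fun j => ⟨0, hM j⟩⟩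
    let Fext : ({x : X // x ∈ CC Pi} → ∀ j, Fin (M j)) → ((j : Fin L) → X → Fin (M j)) := fun φ j x =>
      if h : x ∈ CC Pi then φ ⟨x, h⟩ j else ⟨0, hM j⟩
    have hinner : ∀ p ∈ Pi,
        ∑ φ : {x : X // x ∈ CC Pi} → ∀ j, Fin (M j), ind (bad (Fext φ) p) ≤ (Fintype.card ({x : X // x ∈ CC Pi} → ∀ j, Fin (M j)) : ℝ) * c := by
      intro p hp
      have hp1C : p.1 ∈ CC Pi := hmem1 Pi p hp
      have hind : ∀ φ : {x : X // x ∈ CC Pi} → ∀ j, Fin (M j), ind (bad (Fext φ) p)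
          ≤ ∑ l : Fin L, ∑ x' ∈ Sfin l p.2 \ {p.1},
              ind (∀ j : Fin L, j ≤ l → Fext φ j x' = Fext φ j p.1) := by
        intro φ
        by_cases hb : bad (Fext φ) p
        · rw [ind_of _ hb]
          obtain ⟨l, x', hne, hsl, hcoll⟩ := hb
          have hx'mem : x' ∈ Sfin l p.2 \ {p.1} := by
            rw [Finset.mem_sdiff, Finset.mem_singleton]
            exact ⟨(hSfin_mem l p.2 x').2 hsl, hne⟩
          calc (1:ℝ) = ind (∀ j : Fin L, j ≤ l → Fext φ j x' = Fext φ j p.1) :=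
                (ind_of _ hcoll).symm
            _ ≤ ∑ x'' ∈ Sfin l p.2 \ {p.1},
                  ind (∀ j : Fin L, j ≤ l → Fext φ j x'' = Fext φ j p.1) :=
                Finset.single_le_sum
                  (f := fun x'' => ind (∀ j : Fin L, j ≤ l → Fext φ j x'' = Fext φ j p.1))
                  (fun i _ => ind_nonneg _) hx'mem
            _ ≤ ∑ l' : Fin L, ∑ x'' ∈ Sfin l' p.2 \ {p.1},
                  ind (∀ j : Fin L, j ≤ l' → Fext φ j x'' = Fext φ j p.1) :=
                Finset.single_le_sum
                  (f := fun l' => ∑ x'' ∈ Sfin l' p.2 \ {p.1},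
                    ind (∀ j : Fin L, j ≤ l' → Fext φ j x'' = Fext φ j p.1))
                  (fun i _ => Finset.sum_nonneg fun i' _ => ind_nonneg _) (Finset.mem_univ l)
        · rw [ind_of_not _ hb]
          exact Finset.sum_nonneg fun l _ => Finset.sum_nonneg fun i _ => ind_nonneg _
      calc ∑ φ : {x : X // x ∈ CC Pi} → ∀ j, Fin (M j), ind (bad (Fext φ) p)
          ≤ ∑ φ : {x : X // x ∈ CC Pi} → ∀ j, Fin (M j), ∑ l : Fin L, ∑ x' ∈ Sfin l p.2 \ {p.1},
              ind (∀ j : Fin L, j ≤ l → Fext φ j x' = Fext φ j p.1) :=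
            Finset.sum_le_sum fun φ _ => hind φ
        _ = ∑ l : Fin L, ∑ x' ∈ Sfin l p.2 \ {p.1}, ∑ φ : {x : X // x ∈ CC Pi} → ∀ j, Fin (M j),
              ind (∀ j : Fin L, j ≤ l → Fext φ j x' = Fext φ j p.1) := by
            rw [Finset.sum_comm]
            exact Finset.sum_congr rfl fun l _ => Finset.sum_comm
        _ ≤ ∑ l : Fin L, ∑ x' ∈ Sfin l p.2 \ {p.1},
              (Fintype.card ({x : X // x ∈ CC Pi} → ∀ j, Fin (M j)) : ℝ) * (2:ℝ) ^ (-(lmin + (l : ℕ) * Δ + Δ + γ)) := by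
            refine Finset.sum_le_sum fun l _ => Finset.sum_le_sum fun x' hx' => ?_
            rw [Finset.mem_sdiff, Finset.mem_singleton] at hx'
            have hx'C : x' ∈ CC Pi := hmem2 Pi p l x' hp hx'.1
            have hne' : (⟨p.1, hp1C⟩ : {x : X // x ∈ CC Pi}) ≠ ⟨x', hx'C⟩ := by
              intro h
              exact hx'.2 (by simpa using (congrArg Subtype.val h).symm)
            have hrw : ∑ φ : {x : X // x ∈ CC Pi} → ∀ j, Fin (M j), ind (∀ j : Fin L, j ≤ l → Fext φ j x' = Fext φ j p.1)
                = ∑ φ : {x : X // x ∈ CC Pi} → ∀ j, Fin (M j), ind (∀ j ∈ Finset.univ.filter (fun j : Fin L => j ≤ l),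
                    φ ⟨x', hx'C⟩ j = φ ⟨p.1, hp1C⟩ j) := by
              refine Finset.sum_congr rfl fun φ _ => ind_congr ?_
              constructor
              · intro h j hj
                rw [Finset.mem_filter] at hj
                have := h j hj.2
                simpa [Fext, dif_pos hx'C, dif_pos hp1C] using this
              · intro h j hj
                have := h j (Finset.mem_filter.2 ⟨Finset.mem_univ j, hj⟩)
                simpa [Fext, dif_pos hx'C, dif_pos hp1C] using this
            rw [hrw]
            rw [count_collision M hM (⟨p.1, hp1C⟩ : {x : X // x ∈ CC Pi}) ⟨x', hx'C⟩ hne'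
              (Finset.univ.filter (fun j : Fin L => j ≤ l))]
            have hcard0 : (0:ℝ) ≤ (Fintype.card ({x : X // x ∈ CC Pi} → ∀ j, Fin (M j)) : ℝ) := by positivity
            exact mul_le_mul_of_nonneg_left (hMprod l) hcard0
        _ ≤ ∑ l : Fin L, (Fintype.card ({x : X // x ∈ CC Pi} → ∀ j, Fin (M j)) : ℝ) * (2:ℝ) ^ (-γ) := by
            refine Finset.sum_le_sum fun l _ => ?_
            rw [Finset.sum_const, nsmul_eq_mul]
            have hcard_le : ((Sfin l p.2 \ {p.1}).card : ℝ) ≤ (2:ℝ) ^ (lmin + (l : ℕ) * Δ + Δ) := by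
              refine le_trans ?_ (hSfin_card l p.2)
              exact_mod_cast Finset.card_le_card (Finset.sdiff_subset)
            have hcomb : (2:ℝ) ^ (lmin + (l : ℕ) * Δ + Δ) * (2:ℝ) ^ (-(lmin + (l : ℕ) * Δ + Δ + γ))
                = (2:ℝ) ^ (-γ) := by
              rw [← Real.rpow_add (by norm_num)]
              congr 1
              ring
            calc ((Sfin l p.2 \ {p.1}).card : ℝ)
                  * ((Fintype.card ({x : X // x ∈ CC Pi} → ∀ j, Fin (M j)) : ℝ) * (2:ℝ) ^ (-(lmin + (l : ℕ) * Δ + Δ + γ)))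
                ≤ (2:ℝ) ^ (lmin + (l : ℕ) * Δ + Δ)
                  * ((Fintype.card ({x : X // x ∈ CC Pi} → ∀ j, Fin (M j)) : ℝ) * (2:ℝ) ^ (-(lmin + (l : ℕ) * Δ + Δ + γ))) := by
                  refine mul_le_mul_of_nonneg_right hcard_le ?_
                  have : (0:ℝ) < (2:ℝ) ^ (-(lmin + (l : ℕ) * Δ + Δ + γ)) :=
                    Real.rpow_pos_of_pos (by norm_num) _
                  positivity
              _ = (Fintype.card ({x : X // x ∈ CC Pi} → ∀ j, Fin (M j)) : ℝ)
                  * ((2:ℝ) ^ (lmin + (l : ℕ) * Δ + Δ) * (2:ℝ) ^ (-(lmin + (l : ℕ) * Δ + Δ + γ))) := by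
                  ring
              _ = (Fintype.card ({x : X // x ∈ CC Pi} → ∀ j, Fin (M j)) : ℝ) * (2:ℝ) ^ (-γ) := by rw [hcomb]
        _ = (Fintype.card ({x : X // x ∈ CC Pi} → ∀ j, Fin (M j)) : ℝ) * c := by
            rw [Finset.sum_const, Finset.card_univ, Fintype.card_fin, nsmul_eq_mul, hc]
            ring
    have main : ∑ φ : {x : X // x ∈ CC Pi} → ∀ j, Fin (M j), ∑ p ∈ Pi, PXY p * ind (bad (Fext φ) p)
        ≤ (Fintype.card ({x : X // x ∈ CC Pi} → ∀ j, Fin (M j)) : ℝ) * c := by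
      rw [Finset.sum_comm]
      have hPi1 : ∑ p ∈ Pi, PXY p ≤ 1 := by
        have := Summable.sum_le_tsum Pi (fun p _ => hw p) hsum
        rwa [hPXY.2] at this
      calc ∑ p ∈ Pi, ∑ φ : {x : X // x ∈ CC Pi} → ∀ j, Fin (M j), PXY p * ind (bad (Fext φ) p)
          = ∑ p ∈ Pi, PXY p * ∑ φ : {x : X // x ∈ CC Pi} → ∀ j, Fin (M j), ind (bad (Fext φ) p) := by
            refine Finset.sum_congr rfl fun p _ => ?_
            rw [Finset.mul_sum]
        _ ≤ ∑ p ∈ Pi, PXY p * ((Fintype.card ({x : X // x ∈ CC Pi} → ∀ j, Fin (M j)) : ℝ) * c) := by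
            refine Finset.sum_le_sum fun p hp => ?_
            exact mul_le_mul_of_nonneg_left (hinner p hp) (hw p)
        _ = (∑ p ∈ Pi, PXY p) * ((Fintype.card ({x : X // x ∈ CC Pi} → ∀ j, Fin (M j)) : ℝ) * c) := by rw [← Finset.sum_mul]
        _ ≤ 1 * ((Fintype.card ({x : X // x ∈ CC Pi} → ∀ j, Fin (M j)) : ℝ) * c) := by
            refine mul_le_mul_of_nonneg_right hPi1 ?_
            positivity
        _ = (Fintype.card ({x : X // x ∈ CC Pi} → ∀ j, Fin (M j)) : ℝ) * c := one_mul _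
    have hconst : (∑ _φ : {x : X // x ∈ CC Pi} → ∀ j, Fin (M j), c) = (Fintype.card ({x : X // x ∈ CC Pi} → ∀ j, Fin (M j)) : ℝ) * c := by
      rw [Finset.sum_const, Finset.card_univ, nsmul_eq_mul]
    obtain ⟨φ, _, hφ⟩ := Finset.exists_le_of_sum_le (Finset.univ_nonempty (α := {x : X // x ∈ CC Pi} → ∀ j, Fin (M j)))
      (main.trans hconst.ge)
    exact ⟨Fext φ, hφ⟩
  -- TOPOLOGICAL COMPACTNESS ARGUMENT
  let Φ := (j : Fin L) → X → Fin (M j)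
  let A : Finset (X × Y) → Set Φ := fun Pi =>
    {F | ∑ p ∈ Pi, PXY p * ind (bad F p) ≤ c}
  have hnonneg : ∀ (F : Φ) (p : X × Y), 0 ≤ PXY p * ind (bad F p) :=
    fun F p => mul_nonneg (hw p) (ind_nonneg _)
  have hAne : ∀ Pi, (A Pi).Nonempty := key
  have hAclosed : ∀ Pi, IsClosed (A Pi) := by
    intro Pi
    let D := (j : Fin L) → {x : X // x ∈ CC Pi} → Fin (M j)
    let R : Φ → D := fun F j x => F j x.1
    have hRcont : Continuous R := by
      refine continuous_pi fun j => continuous_pi fun x => ?_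
      exact (continuous_apply x.1).comp (continuous_apply j)
    let g : D → ℝ := fun ρ => ∑ p ∈ Pi, PXY p *
      ind (∃ l : Fin L, ∃ x' : X, ∃ (hx : x' ∈ CC Pi) (hp1 : p.1 ∈ CC Pi), x' ≠ p.1 ∧
        (lmin + (l : ℕ) * Δ ≤ -Real.logb 2 (pcondXY PXY (x', p.2)) ∧
          -Real.logb 2 (pcondXY PXY (x', p.2)) < lmin + (l : ℕ) * Δ + Δ) ∧
        ∀ j : Fin L, j ≤ l → ρ j ⟨x', hx⟩ = ρ j ⟨p.1, hp1⟩)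
    have hfact : ∀ F : Φ, g (R F) = ∑ p ∈ Pi, PXY p * ind (bad F p) := by
      intro F
      refine Finset.sum_congr rfl fun p hp => ?_
      congr 1
      refine ind_congr ?_
      constructor
      · rintro ⟨l, x', hx, hp1, hne, hsl, hcoll⟩
        exact ⟨l, x', hne, hsl, fun j hj => hcoll j hj⟩
      · rintro ⟨l, x', hne, hsl, hcoll⟩
        exact ⟨l, x', hmem2 Pi p l x' hp ((hSfin_mem l p.2 x').2 hsl), hmem1 Pi p hp,
          hne, hsl, fun j hj => hcoll j hj⟩
    have hgA : A Pi = (g ∘ R) ⁻¹' Set.Iic c := by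
      ext F
      simp only [A, Set.mem_setOf_eq, Set.mem_preimage, Function.comp_apply, Set.mem_Iic, hfact F]
    rw [hgA]
    exact IsClosed.preimage ((continuous_of_discreteTopology).comp hRcont) isClosed_Iic
  have hdir : Directed (· ⊇ ·) A := by
    intro P1 P2
    refine ⟨P1 ∪ P2, ?_, ?_⟩ <;>
    · intro F hF
      refine le_trans (Finset.sum_le_sum_of_subset_of_nonneg ?_ fun p _ _ => hnonneg F p) hF
      simp
  have hcomp : ∀ Pi, IsCompact (A Pi) := fun Pi => (hAclosed Pi).isCompact
  obtain ⟨F, hF⟩ := IsCompact.nonempty_iInter_of_directed_nonempty_isCompact_isClosed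
    A hdir hAne hcomp hAclosed
  refine ⟨F, ?_⟩
  have hFall : ∀ Pi : Finset (X × Y), ∑ p ∈ Pi, PXY p * ind (bad F p) ≤ c :=
    fun Pi => (Set.mem_iInter.1 hF Pi : F ∈ A Pi)
  -- convert probOf to a tsum of indicators
  have hsummable : Summable (fun p => PXY p * ind (bad F p)) := by
    refine Summable.of_nonneg_of_le (hnonneg F) (fun p => ?_) hsum
    by_cases h : bad F p
    · rw [ind_of _ h, mul_one]
    · rw [ind_of_not _ h, mul_zero]; exact hw p
  have hind_eq : (Set.indicator {p : X × Y | bad F p} PXY) = fun p => PXY p * ind (bad F p) := by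
    funext p
    by_cases h : bad F p
    · rw [Set.indicator_of_mem (by exact h) PXY, ind_of _ h, mul_one]
    · rw [Set.indicator_of_notMem (by exact h) PXY, ind_of_not _ h, mul_zero]
  calc probOf PXY {p : X × Y | ∃ l : Fin L, ∃ x' : X, x' ≠ p.1 ∧
          (lmin + (l : ℕ) * Δ ≤ -Real.logb 2 (pcondXY PXY (x', p.2)) ∧
            -Real.logb 2 (pcondXY PXY (x', p.2)) < lmin + (l : ℕ) * Δ + Δ) ∧
          ∀ j : Fin L, j ≤ l → F j x' = F j p.1}
      = ∑' p : X × Y, Set.indicator {p : X × Y | bad F p} PXY p := by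
        rw [probOf, tsum_subtype]
    _ = ∑' p : X × Y, PXY p * ind (bad F p) := by rw [hind_eq]
    _ ≤ c := Summable.tsum_le_of_sum_le hsummable hFall
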